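/- Let Y be a set, S ⊆ Y×Y, θ: S → Y, and ℓ: Y×Y → [0,1] with ℓ = 0 off S. Define the binary operation ⊙ on bounded nonnegative functions on Y by (f ⊙ f')(ŷ) = sup_{(y,y') ∈ θ⁻¹[{ŷ}]} ℓ(y,y') f(y) f'(y'). If θ is associative (θ(θ(y,y'),y'') = θ(y,θ(y',y'')) including the extended convention on the added isolated point) and ℓ(y,y')·ℓ(θ(y,y'),y'') = ℓ(y,θ(y',y''))·ℓ(y',y'') for all y,y',y'' ∈ Y, then ⊙ is associative: (f ⊙ f') ⊙ f'' = f ⊙ (f' ⊙ f'') for all bounded nonnegative f, f', f''. -/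
import Mathlib


open scoped ENNReal

/-- Extension of the partial combination map `θ : S → Y` (encoded as
`θ : Y → Y → Option Y`, with `none` playing the role of the isolated point `φ`
and of "undefined") to the extended space `Y ∪ {φ}`. -/
def extTheta {Y : Type*} (θ : Y → Y → Option Y) :
    Option Y → Option Y → Option Y
  | some y, some y' => θ y y'
  | _, _ => none

/-- Extension of the potential `ℓ` by zero whenever an argument is `φ`. -/
def extEll {Y : Type*} (ℓ : Y → Y → ℝ≥0∞) : Option Y → Option Y → ℝ≥0∞
  | some y, some y' => ℓ y y'
  | _, _ => 0

/-- The binary operation `⊙` on bounded nonnegative functions on `Y`: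
`(f ⊙ f')(ŷ) = sup_{(y,y') : θ(y,y') = ŷ} ℓ(y,y') f(y) f'(y')`
(with `sup ∅ = 0`). -/
noncomputable def odot {Y : Type*} (θ : Y → Y → Option Y)
    (ℓ : Y → Y → ℝ≥0∞) (f f' : Y → ℝ≥0∞) : Y → ℝ≥0∞ :=
  fun yhat => ⨆ (y : Y) (y' : Y) (_ : θ y y' = some yhat),
    ℓ y y' * f y * f' y'

/-- If the (extended) combination map `θ` is associative, the
potential `ℓ : Y × Y → [0,1]` vanishes off the domain `S` of `θ`, and `ℓ`
satisfies the cocycle condition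
`ℓ(y,y') ℓ(θ(y,y'),y'') = ℓ(y,θ(y',y'')) ℓ(y',y'')`, then the operation `⊙`
is associative on bounded nonnegative functions. -/
theorem odot_assoc
    (Y : Type*) (θ : Y → Y → Option Y) (ℓ : Y → Y → ℝ≥0∞)
    (hle : ∀ y y', ℓ y y' ≤ 1)
    (hS : ∀ y y', θ y y' = none → ℓ y y' = 0)
    (hθ : ∀ a b c : Option Y,
      extTheta θ (extTheta θ a b) c = extTheta θ a (extTheta θ b c))
    (hℓ : ∀ y y' y'' : Y,
      ℓ y y' * extEll ℓ (θ y y') (some y'') =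
        extEll ℓ (some y) (θ y' y'') * ℓ y' y'')
    (f f' f'' : Y → ℝ≥0∞)
    (hf : (⨆ y, f y) ≠ ⊤) (hf' : (⨆ y, f' y) ≠ ⊤) (hf'' : (⨆ y, f'' y) ≠ ⊤) :
    odot θ ℓ (odot θ ℓ f f') f'' = odot θ ℓ f (odot θ ℓ f' f'') := by

  funext yhat
  apply le_antisymm
  · conv_lhs => simp only [odot, ENNReal.mul_iSup, ENNReal.iSup_mul]
    refine iSup_le fun a => iSup_le fun b => iSup_le fun hab =>
      iSup_le fun y => iSup_le fun y' => iSup_le fun hyy' => ?_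
    have h1 := hθ (some y) (some y') (some b)
    simp only [extTheta, hyy', hab] at h1
    obtain ⟨c, hc⟩ : ∃ c, θ y' b = some c := by
      cases hcc : θ y' b with
      | none => rw [hcc] at h1; simp [extTheta] at h1
      | some c => exact ⟨c, rfl⟩
    rw [hc] at h1
    have hyc : θ y c = some yhat := by simpa [extTheta] using h1.symm
    have h2 := hℓ y y' b
    rw [hyy', hc] at h2
    simp only [extEll] at h2
    have key : ℓ a b * (ℓ y y' * f y * f' y') * f'' b
        = ℓ y c * f y * (ℓ y' b * f' y' * f'' b) := by
      calc ℓ a b * (ℓ y y' * f y * f' y') * f'' b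
          = (ℓ y y' * ℓ a b) * (f y * (f' y' * f'' b)) := by ring
        _ = (ℓ y c * ℓ y' b) * (f y * (f' y' * f'' b)) := by rw [h2]
        _ = ℓ y c * f y * (ℓ y' b * f' y' * f'' b) := by ring
    rw [key]
    have step : ℓ y' b * f' y' * f'' b ≤ odot θ ℓ f' f'' c := by
      simp only [odot]
      exact le_iSup₂_of_le y' b (le_iSup_of_le hc le_rfl)
    calc ℓ y c * f y * (ℓ y' b * f' y' * f'' b)
        ≤ ℓ y c * f y * odot θ ℓ f' f'' c := by gcongr
      _ ≤ odot θ ℓ f (odot θ ℓ f' f'') yhat :=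
          le_iSup₂_of_le y c (le_iSup_of_le hyc le_rfl)
  · conv_lhs => simp only [odot, ENNReal.mul_iSup, ENNReal.iSup_mul]
    refine iSup_le fun a => iSup_le fun b => iSup_le fun hab =>
      iSup_le fun y' => iSup_le fun y'' => iSup_le fun hy' => ?_
    have h1 := hθ (some a) (some y') (some y'')
    simp only [extTheta, hy', hab] at h1
    obtain ⟨c, hc⟩ : ∃ c, θ a y' = some c := by
      cases hcc : θ a y' with
      | none => rw [hcc] at h1; simp [extTheta] at h1
      | some c => exact ⟨c, rfl⟩
    rw [hc] at h1
    have hyc : θ c y'' = some yhat := by simpa [extTheta] using h1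
    have h2 := hℓ a y' y''
    rw [hy', hc] at h2
    simp only [extEll] at h2
    have key : ℓ a b * f a * (ℓ y' y'' * f' y' * f'' y'')
        = (ℓ a y' * f a * f' y') * ℓ c y'' * f'' y'' := by
      calc ℓ a b * f a * (ℓ y' y'' * f' y' * f'' y'')
          = (ℓ a b * ℓ y' y'') * (f a * (f' y' * f'' y'')) := by ring
        _ = (ℓ a y' * ℓ c y'') * (f a * (f' y' * f'' y'')) := by rw [← h2]
        _ = (ℓ a y' * f a * f' y') * ℓ c y'' * f'' y'' := by ring
    rw [key]
    have step : ℓ a y' * f a * f' y' ≤ odot θ ℓ f f' c := by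
      simp only [odot]
      exact le_iSup₂_of_le a y' (le_iSup_of_le hc le_rfl)
    calc (ℓ a y' * f a * f' y') * ℓ c y'' * f'' y''
        = ℓ c y'' * (ℓ a y' * f a * f' y') * f'' y'' := by ring
      _ ≤ ℓ c y'' * odot θ ℓ f f' c * f'' y'' := by gcongr
      _ ≤ odot θ ℓ (odot θ ℓ f f') f'' yhat :=
          le_iSup₂_of_le c y'' (le_iSup_of_le hyc le_rfl)
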